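/- Define TC_ℤ mapping a string (a_0,…,a_n) of nonnegative integers to the string of pairs ((a_0,…,a_n) ↦ (a_i, Σ_{j≤i} C(i,j)·a_j)_{i=0}^n). Then TC_ℤ is a tree code over the integers with distance at least 1/2: for every n and distinct strings a, a' ∈ ℤ_{≥0}^{n+1} with ℓ = split(a,a'), the number of indices i with (a_i, Σ_{j≤i} C(i,j)a_j) ≠ (a'_i, Σ_{j≤i} C(i,j)a'_j) is at least (n+1−ℓ)/2. Moreover, for every i ≤ n, the second coordinate satisfies Σ_{j≤i} C(i,j)·a_j ≤ 2^n · max_j |a_j|. -/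

import Mathlib

open Finset

private noncomputable def Ubin (K : Finset ℕ) (c : ℕ → ℝ) (y : ℕ) : ℝ :=
  ∑ k ∈ K, c k * (y.choose k : ℝ)

private lemma choose_mul' (y k s : ℕ) (hsk : s ≤ k) :
    y.choose k * k.choose s = y.choose s * (y - s).choose (k - s) := by
  rcases le_or_gt k y with h | h
  · exact Nat.choose_mul hsk
  · rw [Nat.choose_eq_zero_of_lt h]
    rcases le_or_gt s y with hs | hs
    · rw [Nat.choose_eq_zero_of_lt (by omega : y - s < k - s), Nat.mul_zero, Nat.zero_mul]
    · rw [Nat.choose_eq_zero_of_lt hs, Nat.zero_mul, Nat.zero_mul]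

private lemma Ubin_delta (K : Finset ℕ) (c : ℕ → ℝ) (h0 : 0 ∉ K) (y : ℕ) :
    Ubin K c (y + 1) - Ubin K c y = Ubin (K.image (· - 1)) (fun j => c (j + 1)) y := by
  have hinj : Set.InjOn (· - 1) K := by
    intro a ha b hb hab
    have ha0 : a ≠ 0 := fun h => h0 (h ▸ ha)
    have hb0 : b ≠ 0 := fun h => h0 (h ▸ hb)
    simp only at hab; omega
  rw [Ubin, Ubin, Ubin, Finset.sum_image hinj, ← Finset.sum_sub_distrib]
  apply Finset.sum_congr rfl
  intro k hk
  have hk0 : k ≠ 0 := fun h => h0 (h ▸ hk)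
  obtain ⟨j, rfl⟩ := Nat.exists_eq_succ_of_ne_zero hk0
  have : (y + 1).choose (j + 1) = y.choose j + y.choose (j + 1) := Nat.choose_succ_succ y j
  rw [Nat.succ_sub_one]
  rw [this]
  push_cast
  ring

private lemma Ubin_window (K : Finset ℕ) (c : ℕ → ℝ) (h0 : 0 ∉ K) (a b : ℕ) (hab : a ≤ b) :
    Ubin K c b - Ubin K c a
      = ∑ y ∈ Finset.Ico a b, Ubin (K.image (· - 1)) (fun j => c (j + 1)) y := by
  induction b, hab using Nat.le_induction with
  | base => simp
  | succ b hab ih =>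
    rw [Finset.sum_Ico_succ_top (by omega), ← ih, ← Ubin_delta K c h0 b]
    ring

private lemma Ubin_norm (K : Finset ℕ) (c : ℕ → ℝ) (k₀ : ℕ) (hk : ∀ k ∈ K, k₀ ≤ k)
    (y : ℕ) (hy : k₀ ≤ y) :
    Ubin K c y = (y.choose k₀ : ℝ) *
      Ubin (K.image (· - k₀)) (fun j => c (j + k₀) / (((j + k₀).choose k₀ : ℕ) : ℝ)) (y - k₀) := by
  have hinj : Set.InjOn (· - k₀) K := by
    intro a ha b hb hab
    have := hk a ha; have := hk b hb
    simp only at hab; omega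
  rw [Ubin, Ubin, Finset.sum_image hinj, Finset.mul_sum]
  apply Finset.sum_congr rfl
  intro k hkK
  have hk0 : k₀ ≤ k := hk k hkK
  have hkk : k - k₀ + k₀ = k := by omega
  rw [hkk]
  have hpos : (0:ℝ) < (k.choose k₀ : ℝ) := by
    exact_mod_cast Nat.choose_pos hk0
  have hid : (y.choose k : ℝ) * (k.choose k₀ : ℝ)
      = (y.choose k₀ : ℝ) * ((y - k₀).choose (k - k₀) : ℝ) := by
    exact_mod_cast congrArg (Nat.cast : ℕ → ℝ) (choose_mul' y k k₀ hk0)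
  have hD : (k.choose k₀ : ℝ) ≠ 0 := ne_of_gt hpos
  field_simp
  linear_combination c k * hid

private lemma alt : ∀ N : ℕ, ∀ (K : Finset ℕ) (c : ℕ → ℝ) (σ : ℝ) (t : ℕ → ℕ) (k₀ : ℕ),
    K.card = N → k₀ ∈ K → (∀ k ∈ K, k₀ ≤ k) → (∀ k ∈ K, c k ≠ 0) → σ ≠ 0 →
    (∀ i, i < N → t i < t (i + 1)) → (∀ i, i ≤ N → k₀ ≤ t i) →
    (∀ i, i ≤ N → 0 ≤ σ * (-1) ^ i * Ubin K c (t i)) → False := by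
  intro N
  induction N using Nat.strong_induction_on with
  | _ N ih =>
  intro K c σ t k₀ hcard hk₀K hk₀lb hc hσ hmono hlb halt
  -- N ≥ 1
  rcases N with _ | n
  · rw [Finset.card_eq_zero] at hcard
    exact absurd (hcard ▸ hk₀K) (Finset.notMem_empty k₀)
  -- Normalize so that the minimal exponent is 0
  set K₀ : Finset ℕ := K.image (· - k₀) with hK₀
  set c₀ : ℕ → ℝ := fun j => c (j + k₀) / (((j + k₀).choose k₀ : ℕ) : ℝ) with hc₀def
  set t₀ : ℕ → ℕ := fun i => t i - k₀ with ht₀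
  have hinj : Set.InjOn (· - k₀) K := by
    intro a ha b hb hab
    have := hk₀lb a ha; have := hk₀lb b hb
    simp only at hab; omega
  have hK₀card : K₀.card = (n + 1) := by rw [hK₀, Finset.card_image_of_injOn hinj, hcard]
  have h0K₀ : 0 ∈ K₀ := by
    rw [hK₀, Finset.mem_image]; exact ⟨k₀, hk₀K, by omega⟩
  have hmem : ∀ j ∈ K₀, j + k₀ ∈ K := by
    intro j hj
    rw [hK₀, Finset.mem_image] at hj
    obtain ⟨k, hk, rfl⟩ := hj
    have := hk₀lb k hk
    simpa [Nat.sub_add_cancel this] using hk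
  have hc₀ : ∀ j ∈ K₀, c₀ j ≠ 0 := by
    intro j hj
    have h1 : c (j + k₀) ≠ 0 := hc _ (hmem j hj)
    have h2 : (0:ℝ) < (((j + k₀).choose k₀ : ℕ) : ℝ) := by
      exact_mod_cast Nat.choose_pos (by omega)
    exact div_ne_zero h1 (ne_of_gt h2)
  have halt₀ : ∀ i, i ≤ (n + 1) → 0 ≤ σ * (-1) ^ i * Ubin K₀ c₀ (t₀ i) := by
    intro i hi
    have h1 := halt i hi
    have hCpos : (0:ℝ) < ((t i).choose k₀ : ℝ) := by
      exact_mod_cast Nat.choose_pos (hlb i hi)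
    rw [Ubin_norm K c k₀ hk₀lb (t i) (hlb i hi)] at h1
    by_contra hneg
    push_neg at hneg
    nlinarith
  have hmono₀ : ∀ i, i < (n + 1) → t₀ i < t₀ (i + 1) := by
    intro i hi
    have := hmono i hi
    have := hlb i (le_of_lt hi)
    have := hlb (i+1) hi
    simp only [ht₀]; omega
  clear halt hmono hlb hc hinj
  -- base case (n + 1) = 1
  rcases n with _ | m
  · have hK₀eq : K₀ = {0} := by
      rw [Finset.card_eq_one] at hK₀card
      obtain ⟨a, ha⟩ := hK₀card
      rw [ha] at h0K₀ ⊢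
      simp only [Finset.mem_singleton] at h0K₀
      rw [h0K₀]
    have hUval : ∀ y, Ubin K₀ c₀ y = c₀ 0 := by
      intro y; rw [hK₀eq, Ubin]; simp
    have h0 := halt₀ 0 (by norm_num)
    have h1 := halt₀ 1 (by norm_num)
    rw [hUval] at h0 h1
    norm_num at h0 h1
    have := hc₀ 0 h0K₀
    rcases (mul_ne_zero hσ this).lt_or_gt with h | h <;> nlinarith
  -- step case (m + 1 + 1) ≥ 2
  set KP : Finset ℕ := K₀.erase 0 with hKP
  have hKPcard : KP.card = m + 1 := by
    rw [hKP, Finset.card_erase_of_mem h0K₀, hK₀card]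
    omega
  have hKPne : KP.Nonempty := Finset.card_pos.mp (by omega)
  set k₂ : ℕ := KP.min' hKPne with hk₂
  have hk₂KP : k₂ ∈ KP := KP.min'_mem hKPne
  have hk₂pos : k₂ ≠ 0 := (Finset.mem_erase.mp hk₂KP).1
  have hk₂lb : ∀ k ∈ KP, k₂ ≤ k := fun k hk => KP.min'_le k hk
  have h0KP : 0 ∉ KP := Finset.notMem_erase 0 K₀
  have hsplit : ∀ y, Ubin K₀ c₀ y = c₀ 0 + Ubin KP c₀ y := by
    intro y
    have : K₀ = insert 0 KP := (Finset.insert_erase h0K₀).symm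
    rw [this, Ubin, Finset.sum_insert h0KP]
    simp [Ubin]
  have hconst : ∀ y, y < k₂ → Ubin K₀ c₀ y = c₀ 0 := by
    intro y hy
    rw [hsplit y, Ubin]
    have : ∀ k ∈ KP, c₀ k * ((y.choose k : ℕ) : ℝ) = 0 := by
      intro k hk
      have : y < k := lt_of_lt_of_le hy (hk₂lb k hk)
      rw [Nat.choose_eq_zero_of_lt this]
      simp
    rw [Finset.sum_congr rfl this]
    simp
  have hc₀0 : c₀ 0 ≠ 0 := hc₀ 0 h0K₀
  -- t₀ 1 ≥ k₂
  have ht₀1 : k₂ ≤ t₀ 1 := by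
    by_contra hlt
    push_neg at hlt
    have h01 : t₀ 0 < t₀ 1 := hmono₀ 0 (by omega)
    have e0 : Ubin K₀ c₀ (t₀ 0) = c₀ 0 := hconst _ (by omega)
    have e1 : Ubin K₀ c₀ (t₀ 1) = c₀ 0 := hconst _ hlt
    have h0 := halt₀ 0 (by omega)
    have h1 := halt₀ 1 (by omega)
    rw [e0] at h0; rw [e1] at h1
    norm_num at h0 h1
    rcases (mul_ne_zero hσ hc₀0).lt_or_gt with h | h <;> nlinarith
  -- adjusted points
  set t' : ℕ → ℕ := fun i => if i = 0 then max (t₀ 0) (k₂ - 1) else t₀ i with ht'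
  have ht'0 : Ubin K₀ c₀ (t' 0) = Ubin K₀ c₀ (t₀ 0) := by
    simp only [ht', if_pos rfl]
    rcases le_or_gt (k₂ - 1) (t₀ 0) with h | h
    · rw [max_eq_left h]
    · rw [max_eq_right (le_of_lt h)]
      rw [hconst (t₀ 0) (by omega), hconst (k₂ - 1) (by omega)]
  have halt' : ∀ i, i ≤ (m + 1 + 1) → 0 ≤ σ * (-1) ^ i * Ubin K₀ c₀ (t' i) := by
    intro i hi
    rcases Nat.eq_zero_or_pos i with rfl | hpos
    · rw [ht'0]; exact halt₀ 0 hi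
    · have : t' i = t₀ i := by simp [ht', Nat.pos_iff_ne_zero.mp hpos]
      rw [this]; exact halt₀ i hi
  have hchain : ∀ j, j ≤ (m + 1 + 1) → ∀ i, i ≤ j → t₀ i ≤ t₀ j := by
    intro j
    induction j with
    | zero =>
      intro _ i hi
      have : i = 0 := by omega
      rw [this]
    | succ j ihj =>
      intro hj i hi
      rcases Nat.lt_or_ge i (j+1) with h | h
      · exact le_trans (ihj (by omega) i (by omega)) (le_of_lt (hmono₀ j (by omega)))
      · have : i = j + 1 := by omega
        rw [this]
  have hmono' : ∀ i, i < (m + 1 + 1) → t' i < t' (i + 1) := by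
    intro i hi
    rcases Nat.eq_zero_or_pos i with rfl | hpos
    · simp only [ht', if_pos rfl, if_neg (by norm_num : (1:ℕ) ≠ 0)]
      have h1 := hmono₀ 0 hi
      have h2 : t₀ (0 + 1) = t₀ 1 := by norm_num
      rw [h2] at h1 ⊢
      exact max_lt h1 (by omega)
    · simp only [ht', if_neg (Nat.pos_iff_ne_zero.mp hpos), if_neg (by omega : i + 1 ≠ 0)]
      exact hmono₀ i hi
  have hlb' : ∀ i, i ≤ (m + 1 + 1) → k₂ - 1 ≤ t' i := by
    intro i hi
    rcases Nat.eq_zero_or_pos i with rfl | hpos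
    · simp only [ht', if_pos rfl]; exact le_max_right _ _
    · simp only [ht', if_neg (Nat.pos_iff_ne_zero.mp hpos)]
      have : t₀ 1 ≤ t₀ i := by
        rcases Nat.eq_or_lt_of_le hpos with h | h
        · rw [← h]
        · exact hchain i hi 1 (by omega)
      omega
  -- the difference data
  set K' : Finset ℕ := KP.image (· - 1) with hK'
  set c' : ℕ → ℝ := fun j => c₀ (j + 1) with hc'def
  have hinj' : Set.InjOn (· - 1) KP := by
    intro a ha b hb hab
    have ha0 : a ≠ 0 := (Finset.mem_erase.mp ha).1
    have hb0 : b ≠ 0 := (Finset.mem_erase.mp hb).1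
    simp only at hab; omega
  have hK'card : K'.card = m + 1 := by rw [hK', Finset.card_image_of_injOn hinj', hKPcard]
  have hk₂K' : k₂ - 1 ∈ K' := by
    rw [hK', Finset.mem_image]; exact ⟨k₂, hk₂KP, rfl⟩
  have hK'lb : ∀ j ∈ K', k₂ - 1 ≤ j := by
    intro j hj
    rw [hK', Finset.mem_image] at hj
    obtain ⟨k, hk, rfl⟩ := hj
    have := hk₂lb k hk
    omega
  have hc' : ∀ j ∈ K', c' j ≠ 0 := by
    intro j hj
    rw [hK', Finset.mem_image] at hj
    obtain ⟨k, hk, rfl⟩ := hj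
    have hk0 : k ≠ 0 := (Finset.mem_erase.mp hk).1
    have : k - 1 + 1 = k := by omega
    rw [hc'def]
    simp only [this]
    exact hc₀ k (Finset.mem_of_mem_erase hk)
  -- windows
  have hwin : ∀ a b : ℕ, a ≤ b →
      Ubin K₀ c₀ b - Ubin K₀ c₀ a = ∑ y ∈ Finset.Ico a b, Ubin K' c' y := by
    intro a b hab
    have h1 := Ubin_window KP c₀ h0KP a b hab
    rw [hsplit a, hsplit b]
    rw [show c₀ 0 + Ubin KP c₀ b - (c₀ 0 + Ubin KP c₀ a) = Ubin KP c₀ b - Ubin KP c₀ a by ring]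
    rw [h1, hK', hc'def]
  have hex : ∀ i, i < (m + 1 + 1) → ∃ s, t' i ≤ s ∧ s < t' (i + 1) ∧ 0 ≤ (-σ) * (-1) ^ i * Ubin K' c' s := by
    intro i hi
    have hii : t' i < t' (i+1) := hmono' i hi
    have hsum := hwin (t' i) (t' (i+1)) (le_of_lt hii)
    have hA := halt' i (le_of_lt hi)
    have hB := halt' (i+1) hi
    have hkey : 0 ≤ (-σ) * (-1) ^ i * (Ubin K₀ c₀ (t' (i+1)) - Ubin K₀ c₀ (t' i)) := by
      rw [pow_succ] at hB
      nlinarith [hA, hB]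
    by_contra hno
    push_neg at hno
    have hneg : ∑ y ∈ Finset.Ico (t' i) (t' (i+1)), ((-σ) * (-1) ^ i * Ubin K' c' y) < 0 := by
      apply Finset.sum_neg
      · intro y hy
        rw [Finset.mem_Ico] at hy
        exact hno y hy.1 hy.2
      · rw [← Finset.nonempty_Ico] at hii
        exact hii
    rw [← Finset.mul_sum, ← hsum] at hneg
    linarith
  have hex' : ∀ i, ∃ s, i < (m + 1 + 1) → (t' i ≤ s ∧ s < t' (i + 1) ∧ 0 ≤ (-σ) * (-1) ^ i * Ubin K' c' s) := by
    intro i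
    by_cases h : i < (m + 1 + 1)
    · exact (hex i h).imp (fun s hs => fun _ => hs)
    · exact ⟨0, fun h' => absurd h' h⟩
  choose s hs using hex'
  -- apply induction hypothesis
  refine ih (m + 1) (by omega) K' c' (-σ) s (k₂ - 1) hK'card hk₂K' hK'lb hc' (neg_ne_zero.mpr hσ)
    ?_ ?_ ?_
  · intro i hi
    have h1 := hs i (by omega)
    have h2 := hs (i+1) (by omega)
    exact lt_of_lt_of_le h1.2.1 h2.1
  · intro i hi
    have h1 := hs i (by omega)
    exact le_trans (hlb' i (by omega)) h1.1
  · intro i hi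
    exact (hs i (by omega)).2.2

private lemma zeros_le (K : Finset ℕ) (c : ℕ → ℝ) (k₀ : ℕ) (hk₀K : k₀ ∈ K)
    (hk₀lb : ∀ k ∈ K, k₀ ≤ k) (hc : ∀ k ∈ K, c k ≠ 0)
    (S : Finset ℕ) (hS : ∀ y ∈ S, k₀ ≤ y ∧ Ubin K c y = 0) : S.card ≤ K.card := by
  by_contra h
  push_neg at h
  obtain ⟨S', hS'sub, hS'card⟩ := Finset.exists_subset_card_eq (by omega : K.card + 1 ≤ S.card)
  set N := K.card with hN
  have hiso := S'.orderIsoOfFin hS'card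
  set t : ℕ → ℕ := fun i => if h : i < N + 1 then ((hiso ⟨i, h⟩ : S') : ℕ) else 0 with ht
  have htmem : ∀ i, i ≤ N → t i ∈ S := by
    intro i hi
    have h1 : i < N + 1 := by omega
    simp only [ht, dif_pos h1]
    exact hS'sub (hiso ⟨i, h1⟩).2
  apply alt N K c 1 t k₀ rfl hk₀K hk₀lb hc one_ne_zero
  · intro i hi
    have h1 : i < N + 1 := by omega
    have h2 : i + 1 < N + 1 := by omega
    simp only [ht, dif_pos h1, dif_pos h2]
    have : (⟨i, h1⟩ : Fin (N + 1)) < ⟨i + 1, h2⟩ := by simp [Fin.lt_def]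
    exact_mod_cast (hiso.lt_iff_lt.mpr this)
  · intro i hi
    exact (hS _ (htmem i hi)).1
  · intro i hi
    rw [(hS _ (htmem i hi)).2]
    simp


/-- The tree code over the integers obtained from the Pascal matrix:
`TC_ℤ(a)_i = (a_i, Σ_j C(i,j)·a_j)` (note `C(i,j) = 0` for `j > i`, so the sum
effectively ranges over `j ≤ i` and the encoding is online).
(a) For any two distinct strings `a, a' ∈ ℤ_{≥0}^{n+1}` with split `ℓ`, the encodings
differ in at least `(n+1−ℓ)/2` positions (distance at least `1/2`).
(b) Each output integer is bounded: `Σ_j C(i,j)·a_j ≤ 2^n · max_j a_j`. -/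
theorem integer_tree_code (n : ℕ) :
    (∀ (a a' : Fin (n + 1) → ℕ) (ℓ : ℕ) (hℓ : ℓ < n + 1),
      (∀ i : Fin (n + 1), i.val < ℓ → a i = a' i) → a ⟨ℓ, hℓ⟩ ≠ a' ⟨ℓ, hℓ⟩ →
      ((n : ℝ) + 1 - ℓ) / 2 ≤
        (hammingDist
          (fun i : Fin (n + 1) => (a i, ∑ j : Fin (n + 1), (i.val).choose j.val * a j))
          (fun i : Fin (n + 1) => (a' i, ∑ j : Fin (n + 1), (i.val).choose j.val * a' j)) : ℝ))
    ∧
    (∀ (a : Fin (n + 1) → ℕ) (i : Fin (n + 1)),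
      ∑ j : Fin (n + 1), (i.val).choose j.val * a j ≤ 2 ^ n * Finset.univ.sup a) := by
  constructor
  · intro a a' ℓ hℓ hpre hdiff
    set f : Fin (n + 1) → ℕ × ℕ :=
      fun i => (a i, ∑ j : Fin (n + 1), (i.val).choose j.val * a j) with hf
    set g : Fin (n + 1) → ℕ × ℕ :=
      fun i => (a' i, ∑ j : Fin (n + 1), (i.val).choose j.val * a' j) with hg
    set K : Finset ℕ := (univ.filter (fun i : Fin (n + 1) => a i ≠ a' i)).image Fin.val with hK
    set c : ℕ → ℝ :=
      fun k => if h : k < n + 1 then ((a ⟨k, h⟩ : ℝ) - (a' ⟨k, h⟩ : ℝ)) else 0 with hcdef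
    have hc : ∀ k ∈ K, c k ≠ 0 := by
      intro k hk
      rw [hK, Finset.mem_image] at hk
      obtain ⟨i, hi, rfl⟩ := hk
      rw [Finset.mem_filter] at hi
      rw [hcdef]
      simp only [dif_pos i.isLt, Fin.eta]
      rw [sub_ne_zero]
      exact_mod_cast fun hh => hi.2 (Nat.cast_injective hh)
    have hℓK : ℓ ∈ K := by
      rw [hK, Finset.mem_image]
      exact ⟨⟨ℓ, hℓ⟩, Finset.mem_filter.mpr ⟨Finset.mem_univ _, hdiff⟩, rfl⟩
    have hlbK : ∀ k ∈ K, ℓ ≤ k := by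
      intro k hk
      rw [hK, Finset.mem_image] at hk
      obtain ⟨i, hi, rfl⟩ := hk
      rw [Finset.mem_filter] at hi
      by_contra hlt
      exact hi.2 (hpre i (by omega))
    have hUeval : ∀ y : ℕ,
        Ubin K c y = ((∑ j : Fin (n + 1), y.choose j.val * a j : ℕ) : ℝ)
          - ((∑ j : Fin (n + 1), y.choose j.val * a' j : ℕ) : ℝ) := by
      intro y
      have hinj : Set.InjOn Fin.val ((univ.filter (fun i : Fin (n + 1) => a i ≠ a' i)) : Set (Fin (n+1))) :=
        Fin.val_injective.injOn
      rw [Ubin, hK, Finset.sum_image hinj]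
      have hext : ∑ i ∈ univ.filter (fun i : Fin (n + 1) => a i ≠ a' i),
            c i.val * ((y.choose i.val : ℕ) : ℝ)
          = ∑ i : Fin (n + 1), c i.val * ((y.choose i.val : ℕ) : ℝ) := by
        apply Finset.sum_subset (Finset.filter_subset _ _)
        intro i _ hin
        rw [Finset.mem_filter] at hin
        push_neg at hin
        have : a i = a' i := hin (Finset.mem_univ i)
        rw [hcdef]
        simp [dif_pos i.isLt, Fin.eta, this]
      rw [hext]
      push_cast
      rw [← Finset.sum_sub_distrib]
      apply Finset.sum_congr rfl
      intro i _
      rw [hcdef]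
      simp only [dif_pos i.isLt, Fin.eta]
      ring
    set S : Finset ℕ :=
      (univ.filter (fun i : Fin (n + 1) => ℓ ≤ i.val ∧ f i = g i)).image Fin.val with hS
    have hSzero : ∀ y ∈ S, ℓ ≤ y ∧ Ubin K c y = 0 := by
      intro y hy
      rw [hS, Finset.mem_image] at hy
      obtain ⟨i, hi, rfl⟩ := hy
      rw [Finset.mem_filter] at hi
      refine ⟨hi.2.1, ?_⟩
      have h2 : (∑ j : Fin (n + 1), (i.val).choose j.val * a j)
          = ∑ j : Fin (n + 1), (i.val).choose j.val * a' j := congrArg Prod.snd hi.2.2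
      rw [hUeval i.val, h2, sub_self]
    have hAD := zeros_le K c ℓ hℓK hlbK hc S hSzero
    -- cardinalities
    have hcardS : S.card = (univ.filter (fun i : Fin (n + 1) => ℓ ≤ i.val ∧ f i = g i)).card :=
      Finset.card_image_of_injective _ Fin.val_injective
    have hcardK : K.card = (univ.filter (fun i : Fin (n + 1) => a i ≠ a' i)).card :=
      Finset.card_image_of_injective _ Fin.val_injective
    have hKsub : (univ.filter (fun i : Fin (n + 1) => a i ≠ a' i))
        ⊆ (univ.filter (fun i : Fin (n + 1) => ℓ ≤ i.val ∧ ¬(f i = g i))) := by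
      intro i hi
      rw [Finset.mem_filter] at hi ⊢
      refine ⟨hi.1, ?_, ?_⟩
      · by_contra hlt
        exact hi.2 (hpre i (by omega))
      · intro heq
        exact hi.2 (congrArg Prod.fst heq)
    have hsplitcard :
        (univ.filter (fun i : Fin (n + 1) => ℓ ≤ i.val ∧ f i = g i)).card
          + (univ.filter (fun i : Fin (n + 1) => ℓ ≤ i.val ∧ ¬(f i = g i))).card
        = (univ.filter (fun i : Fin (n + 1) => ℓ ≤ i.val)).card := by
      rw [← Finset.filter_filter, ← Finset.filter_filter]
      exact Finset.card_filter_add_card_filter_not _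
    have hcount : (univ.filter (fun i : Fin (n + 1) => ℓ ≤ i.val)).card = n + 1 - ℓ := by
      have himg : (univ.filter (fun i : Fin (n + 1) => ℓ ≤ i.val)).image Fin.val
          = Finset.Ico ℓ (n + 1) := by
        ext k
        simp only [Finset.mem_image, Finset.mem_filter, Finset.mem_univ, true_and,
          Finset.mem_Ico]
        constructor
        · rintro ⟨i, hi, rfl⟩; exact ⟨hi, i.isLt⟩
        · rintro ⟨h1, h2⟩; exact ⟨⟨k, h2⟩, h1, rfl⟩
      have := congrArg Finset.card himg
      rw [Finset.card_image_of_injective _ Fin.val_injective, Nat.card_Ico] at this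
      exact this
    have hham : (univ.filter (fun i : Fin (n + 1) => ℓ ≤ i.val ∧ ¬(f i = g i))).card
        ≤ hammingDist f g := by
      apply Finset.card_le_card
      intro i hi
      rw [Finset.mem_filter] at hi
      simp only [hammingDist, Finset.mem_filter, Finset.mem_univ, true_and]
      exact hi.2.2
    have hKle : K.card ≤ (univ.filter (fun i : Fin (n + 1) => ℓ ≤ i.val ∧ ¬(f i = g i))).card :=
      hcardK ▸ Finset.card_le_card hKsub
    have hmain : n + 1 - ℓ ≤ 2 * hammingDist f g := by
      rw [hcardS] at hAD
      omega
    have hcast : ((n + 1 - ℓ : ℕ) : ℝ) ≤ 2 * (hammingDist f g : ℝ) := by exact_mod_cast hmain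
    rw [Nat.cast_sub (by omega)] at hcast
    push_cast at hcast
    linarith
  · intro a i
    have hstep : ∀ j : Fin (n + 1), (i.val).choose j.val * a j
        ≤ (i.val).choose j.val * Finset.univ.sup a := by
      intro j
      exact Nat.mul_le_mul_left _ (Finset.le_sup (Finset.mem_univ j))
    calc ∑ j : Fin (n + 1), (i.val).choose j.val * a j
        ≤ ∑ j : Fin (n + 1), (i.val).choose j.val * Finset.univ.sup a :=
          Finset.sum_le_sum fun j _ => hstep j
      _ = (∑ j : Fin (n + 1), (i.val).choose j.val) * Finset.univ.sup a := by
          rw [← Finset.sum_mul]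
      _ = (∑ k ∈ Finset.range (n + 1), (i.val).choose k) * Finset.univ.sup a := by
          rw [Fin.sum_univ_eq_sum_range]
      _ = 2 ^ i.val * Finset.univ.sup a := by
          congr 1
          rw [← Nat.sum_range_choose i.val]
          apply (Finset.sum_subset ?_ ?_).symm
          · intro k hk
            rw [Finset.mem_range] at hk ⊢
            have := i.isLt
            omega
          · intro k _ hk
            rw [Finset.mem_range] at hk
            exact Nat.choose_eq_zero_of_lt (by omega)
      _ ≤ 2 ^ n * Finset.univ.sup a :=
          Nat.mul_le_mul_right _ (Nat.pow_le_pow_right (by norm_num) (by omega))
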